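/- Every nonempty τ₀-open subset of ω^{<ω} contains a cone [t'] for some t' ∈ ω^{<ω}. -/

import Mathlib

/-- The cone `[t] = {s : t ⊆ s}`. -/
def cone (t : List ℕ) : Set (List ℕ) := {s | t <+: s}

/-- The subbasis for the topology `τ₀`: all cones and all complements of cones. -/
def subbasis0 : Set (Set (List ℕ)) :=
  {C | ∃ t, C = cone t} ∪ {C | ∃ t, C = (cone t)ᶜ}

/-- The topology `τ₀` on `ω^{<ω}`. -/
def tau0 : TopologicalSpace (List ℕ) := TopologicalSpace.generateFrom subbasis0

lemma cone_inj : Function.Injective cone := by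
  intro a b h
  have ha : a ∈ cone b := h ▸ List.prefix_refl a
  have hb : b ∈ cone a := h.symm ▸ List.prefix_refl b
  exact List.IsPrefix.eq_of_length hb (le_antisymm hb.length_le ha.length_le)

theorem stmt8 (U : Set (List ℕ)) (hU : @IsOpen _ tau0 U) (hne : U.Nonempty) :
    ∃ t : List ℕ, cone t ⊆ U := by
  letI := tau0
  obtain ⟨s, hs⟩ := hne
  have hb := TopologicalSpace.isTopologicalBasis_of_subbasis (s := subbasis0) rfl
  obtain ⟨v, hv, hsv, hvU⟩ := hb.exists_subset_of_mem_open hs hU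
  obtain ⟨S, ⟨hSfin, hSsub⟩, rfl⟩ := hv
  -- The set of lists whose cone-complement appears in S
  have hTfin : {t : List ℕ | (cone t)ᶜ ∈ S}.Finite := by
    have : {t : List ℕ | (cone t)ᶜ ∈ S} = (fun t => (cone t)ᶜ) ⁻¹' S := rfl
    rw [this]
    exact hSfin.preimage ((compl_injective.comp cone_inj).injOn)
  have hheads : ((fun t : List ℕ => t.getD s.length 0) '' {t | (cone t)ᶜ ∈ S}).Finite :=
    hTfin.image _
  obtain ⟨B, hB⟩ := hheads.bddAbove
  set N := B + 1 with hN
  refine ⟨s ++ [N], fun x hx => hvU ?_⟩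
  have hsx : s ++ [N] <+: x := hx
  intro C hC
  rcases hSsub hC with ⟨t, rfl⟩ | ⟨t, rfl⟩
  · -- C = cone t, with s ∈ cone t
    have hts : t <+: s := hsv _ hC
    exact hts.trans ((s.prefix_append [N]).trans hsx)
  · -- C = (cone t)ᶜ, with s ∉ cone t
    have hnts : ¬ t <+: s := hsv _ hC
    intro htx
    have hkey : t.getD s.length 0 = N := by
      rcases List.prefix_or_prefix_of_prefix htx hsx with h | h
      · -- t <+: s ++ [N]
        have hlen : ¬ t.length ≤ s.length := fun hle =>
          hnts (List.prefix_of_prefix_length_le h (s.prefix_append [N]) hle)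
        have hlen2 : t.length = s.length + 1 := by
          have := h.length_le
          simp at this
          omega
        have : t = s ++ [N] := h.eq_of_length (by simp [hlen2])
        rw [this, List.getD_eq_getElem _ _ (by simp)]
        simp
      · -- s ++ [N] <+: t
        have hl : s.length < t.length := by
          have := h.length_le; simp at this; omega
        rw [List.getD_eq_getElem _ _ hl]
        have := h.getElem (i := s.length) (by simp)
        rw [← this]
        simp
    have hmem : t.getD s.length 0 ∈ (fun t : List ℕ => t.getD s.length 0) ''
        {t | (cone t)ᶜ ∈ S} := ⟨t, hC, rfl⟩
    have := hB hmem
    omega
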